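/- Let A be an arrangement of d lines with t_d = t_{d−1} = 0. Then (d−2)·c̄₁² − (2d−6)·c̄₂ ≥ 0, i.e., c̄₁²/c̄₂ ≥ (2d−6)/(d−2), with equality if and only if t_2 = d(d−1)/2 (the arrangement has only nodes). -/

import Mathlib

open scoped BigOperators

/-- Points and lines of the projective plane over `k` (lines via duality). -/
abbrev ProjPlane (k : Type*) [Field k] := Projectivization k (Fin 3 → k)

/-- Incidence between a point `p` and a line `L` (given by its dual coefficients):
all representatives pair to zero under the standard bilinear form. -/
def Incid {k : Type*} [Field k] (p L : ProjPlane k) : Prop :=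
  ∀ v ∈ p.submodule, ∀ w ∈ L.submodule, ∑ i, v i * w i = 0

/-- Number of lines of the arrangement `A` passing through the point `p`. -/
noncomputable def linesThrough {k : Type*} [Field k]
    (A : Finset (ProjPlane k)) (p : ProjPlane k) : ℕ :=
  {L : ProjPlane k | L ∈ A ∧ Incid p L}.ncard

/-- `tm A m` is the number of `m`-points of the arrangement `A`. -/
noncomputable def tm {k : Type*} [Field k]
    (A : Finset (ProjPlane k)) (m : ℕ) : ℕ :=
  {p : ProjPlane k | linesThrough A p = m}.ncard

/-- The arrangement is trivial if all its lines pass through a common point. -/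
def IsTrivial {k : Type*} [Field k] (A : Finset (ProjPlane k)) : Prop :=
  ∃ p : ProjPlane k, ∀ L ∈ A, Incid p L

/-- First Chern number of a line arrangement. -/
noncomputable def c1sq {k : Type*} [Field k] (A : Finset (ProjPlane k)) : ℤ :=
  9 - 5 * (A.card : ℤ) +
    ∑ m ∈ Finset.Icc 2 A.card, (3 * (m : ℤ) - 4) * (tm A m : ℤ)

/-- Second Chern number of a line arrangement. -/
noncomputable def c2 {k : Type*} [Field k] (A : Finset (ProjPlane k)) : ℤ :=
  3 - 2 * (A.card : ℤ) +
    ∑ m ∈ Finset.Icc 2 A.card, ((m : ℤ) - 1) * (tm A m : ℤ)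

section Aux

open Matrix Projectivization

variable {k : Type*} [Field k]

lemma incid_mk_mk (v w : Fin 3 → k) (hv : v ≠ 0) (hw : w ≠ 0) :
    Incid (mk k v hv) (mk k w hw) ↔ ∑ i, v i * w i = 0 := by
  constructor
  · intro h
    exact h v (by rw [submodule_mk]; exact Submodule.mem_span_singleton_self v)
      w (by rw [submodule_mk]; exact Submodule.mem_span_singleton_self w)
  · intro h x hx y hy
    rw [submodule_mk, Submodule.mem_span_singleton] at hx hy
    obtain ⟨a, rfl⟩ := hx
    obtain ⟨b, rfl⟩ := hy
    have habs : ∀ i, (a • v) i * (b • w) i = a * b * (v i * w i) := by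
      intro i; simp only [Pi.smul_apply, smul_eq_mul]; ring
    rw [Finset.sum_congr rfl fun i _ => habs i, ← Finset.mul_sum, h, mul_zero]

lemma incid_iff (p L : ProjPlane k) :
    Incid p L ↔ ∑ i, p.rep i * L.rep i = 0 := by
  conv_lhs => rw [← p.mk_rep, ← L.mk_rep]
  exact incid_mk_mk _ _ _ _

lemma incid_mk_left (v : Fin 3 → k) (hv : v ≠ 0) (L : ProjPlane k) :
    Incid (Projectivization.mk k v hv) L ↔ ∑ i, v i * L.rep i = 0 := by
  conv_lhs => rw [← L.mk_rep]
  exact incid_mk_mk _ _ _ _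

/-- BAC-CAB identity. -/
lemma bac_cab (u v w : Fin 3 → k) :
    u ⨯₃ (v ⨯₃ w) = (u ⬝ᵥ w) • v - (u ⬝ᵥ v) • w := by
  ext i
  fin_cases i <;>
    simp [cross_apply, dotProduct, Fin.sum_univ_three, Pi.smul_apply, smul_eq_mul] <;> ring

lemma cross_zero_collinear {a b : Fin 3 → k} (ha : a ≠ 0) (h : a ⨯₃ b = 0) :
    ∃ t : k, b = t • a := by
  by_contra hc
  push_neg at hc
  have hli : LinearIndependent k ![a, b] :=
    (LinearIndependent.pair_iff' ha).2 fun t ht => hc t ht.symm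
  exact (crossProduct_ne_zero_iff_linearIndependent.2 hli) h

/-- Two distinct lines meet in a unique point. -/
lemma meet_exists_unique (L₁ L₂ : ProjPlane k) (h : L₁ ≠ L₂) :
    ∃! p : ProjPlane k, Incid p L₁ ∧ Incid p L₂ := by
  have hw₁0 : L₁.rep ≠ 0 := L₁.rep_nonzero
  have hw₂0 : L₂.rep ≠ 0 := L₂.rep_nonzero
  have hli : LinearIndependent k ![L₁.rep, L₂.rep] := by
    rw [LinearIndependent.pair_iff' hw₁0]
    intro a ha
    have ha0 : a ≠ 0 := by
      rintro rfl; rw [zero_smul] at ha; exact hw₂0 ha.symm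
    apply h
    conv_lhs => rw [← L₁.mk_rep]
    conv_rhs => rw [← L₂.mk_rep]
    refine (mk_eq_mk_iff' k _ _ hw₁0 hw₂0).2 ⟨a⁻¹, ?_⟩
    rw [← ha, smul_smul, inv_mul_cancel₀ ha0, one_smul]
  have hc : L₁.rep ⨯₃ L₂.rep ≠ 0 := crossProduct_ne_zero_iff_linearIndependent.2 hli
  refine ⟨mk k (L₁.rep ⨯₃ L₂.rep) hc, ⟨?_, ?_⟩, ?_⟩
  · rw [incid_mk_left]
    have hds := dot_self_cross L₁.rep L₂.rep
    simp only [dotProduct] at hds ⊢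
    rw [← hds]
    exact Finset.sum_congr rfl fun i _ => mul_comm _ _
  · rw [incid_mk_left]
    have hds := dot_cross_self L₁.rep L₂.rep
    simp only [dotProduct] at hds ⊢
    rw [← hds]
    exact Finset.sum_congr rfl fun i _ => mul_comm _ _
  · rintro q ⟨hq₁, hq₂⟩
    rw [incid_iff] at hq₁ hq₂
    have hdot1 : q.rep ⬝ᵥ L₁.rep = 0 := hq₁
    have hdot2 : q.rep ⬝ᵥ L₂.rep = 0 := hq₂
    have hxc : (L₁.rep ⨯₃ L₂.rep) ⨯₃ q.rep = 0 := by
      rw [← cross_anticomm, bac_cab, hdot1, hdot2, zero_smul, zero_smul, sub_zero, neg_zero]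
    obtain ⟨t, ht⟩ := cross_zero_collinear hc hxc
    have ht0 : t ≠ 0 := by
      rintro rfl; rw [zero_smul] at ht; exact q.rep_nonzero ht
    conv_lhs => rw [← q.mk_rep]
    exact (mk_eq_mk_iff' k _ _ q.rep_nonzero hc).2 ⟨t, ht.symm⟩

/-- The fundamental combinatorial identity `d(d-1) = ∑ m(m-1) t_m`. -/
lemma count_identity (A : Finset (ProjPlane k)) :
    (A.card : ℤ) * ((A.card : ℤ) - 1)
      = ∑ m ∈ Finset.Icc 2 A.card, (m : ℤ) * ((m : ℤ) - 1) * (tm A m : ℤ) := by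
  classical
  set F : ProjPlane k → Finset (ProjPlane k) := fun p => A.filter (fun L => Incid p L) with hF
  have hlt : ∀ p, linesThrough A p = (F p).card := by
    intro p
    have hset : {L : ProjPlane k | L ∈ A ∧ Incid p L} = ↑(F p) := by
      ext L; simp [hF, Finset.mem_filter]
    rw [linesThrough, hset, Set.ncard_coe_finset]
  set g : ProjPlane k × ProjPlane k → ProjPlane k := fun q =>
    if h : q.1 = q.2 then q.1 else Classical.choose (meet_exists_unique q.1 q.2 h) with hg
  have hg_spec : ∀ (L₁ L₂ : ProjPlane k), L₁ ≠ L₂ →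
      (Incid (g (L₁, L₂)) L₁ ∧ Incid (g (L₁, L₂)) L₂) ∧
        ∀ p, Incid p L₁ → Incid p L₂ → p = g (L₁, L₂) := by
    intro L₁ L₂ hne
    have hgeq : g (L₁, L₂) = Classical.choose (meet_exists_unique L₁ L₂ hne) := by
      rw [hg]; exact dif_neg hne
    rw [hgeq]
    obtain ⟨hh1, hh2⟩ := Classical.choose_spec (meet_exists_unique L₁ L₂ hne)
    exact ⟨hh1, fun p hp1 hp2 => hh2 p ⟨hp1, hp2⟩⟩
  set P : Finset (ProjPlane k) := A.offDiag.image g with hP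
  have fiber_eq : ∀ p : ProjPlane k,
      A.offDiag.filter (fun q => g q = p) = (F p).offDiag := by
    intro p
    ext ⟨L₁, L₂⟩
    simp only [Finset.mem_filter, Finset.mem_offDiag, hF]
    constructor
    · rintro ⟨⟨hh1, hh2, hne⟩, hgp⟩
      obtain ⟨⟨hi1, hi2⟩, _⟩ := hg_spec L₁ L₂ hne
      rw [hgp] at hi1 hi2
      exact ⟨⟨hh1, hi1⟩, ⟨hh2, hi2⟩, hne⟩
    · rintro ⟨⟨hh1, hi1⟩, ⟨hh2, hi2⟩, hne⟩
      obtain ⟨_, huniq⟩ := hg_spec L₁ L₂ hne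
      exact ⟨⟨hh1, hh2, hne⟩, (huniq p hi1 hi2).symm⟩
  have hcount : A.offDiag.card = ∑ p ∈ P, ((F p).card * (F p).card - (F p).card) := by
    rw [Finset.card_eq_sum_card_fiberwise (f := g) (t := P)
      (fun q hq => Finset.mem_image_of_mem g hq)]
    exact Finset.sum_congr rfl fun p _ => by rw [fiber_eq p, Finset.offDiag_card]
  have hn_mem : ∀ p ∈ P, (F p).card ∈ Finset.Icc 2 A.card := by
    intro p hp
    rw [hP, Finset.mem_image] at hp
    obtain ⟨⟨L₁, L₂⟩, hq, hgp⟩ := hp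
    rw [Finset.mem_offDiag] at hq
    obtain ⟨hh1, hh2, hne⟩ := hq
    obtain ⟨⟨hi1, hi2⟩, _⟩ := hg_spec L₁ L₂ hne
    rw [hgp] at hi1 hi2
    have hsub : ({L₁, L₂} : Finset (ProjPlane k)) ⊆ F p := by
      intro L hL
      rw [Finset.mem_insert, Finset.mem_singleton] at hL
      rcases hL with rfl | rfl
      · exact Finset.mem_filter.2 ⟨hh1, hi1⟩
      · exact Finset.mem_filter.2 ⟨hh2, hi2⟩
    have h2le : 2 ≤ (F p).card := by
      calc 2 = ({L₁, L₂} : Finset (ProjPlane k)).card := (Finset.card_pair hne).symm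
        _ ≤ (F p).card := Finset.card_le_card hsub
    exact Finset.mem_Icc.2 ⟨h2le, Finset.card_le_card (Finset.filter_subset _ _)⟩
  have htm : ∀ m ∈ Finset.Icc 2 A.card,
      tm A m = (P.filter (fun p => (F p).card = m)).card := by
    intro m hm
    rw [Finset.mem_Icc] at hm
    have hset : {p : ProjPlane k | linesThrough A p = m}
        = ↑(P.filter (fun p => (F p).card = m)) := by
      ext p
      simp only [Set.mem_setOf_eq, Finset.coe_filter, hlt]
      constructor
      · intro hcard
        refine ⟨?_, hcard⟩
        have h2c : 1 < (F p).card := lt_of_lt_of_le one_lt_two (hcard ▸ hm.1)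
        obtain ⟨L₁, hL₁, L₂, hL₂, hne⟩ := Finset.one_lt_card.1 h2c
        have hi1 := (Finset.mem_filter.1 hL₁).2
        have hi2 := (Finset.mem_filter.1 hL₂).2
        obtain ⟨_, huniq⟩ := hg_spec L₁ L₂ hne
        rw [hP, Finset.mem_image]
        refine ⟨(L₁, L₂), Finset.mem_offDiag.2
          ⟨(Finset.mem_filter.1 hL₁).1, (Finset.mem_filter.1 hL₂).1, hne⟩,
          (huniq p hi1 hi2).symm⟩
      · exact fun h => h.2
    rw [tm, hset, Set.ncard_coe_finset]
  have hsq : ∀ n : ℕ, ((n * n - n : ℕ) : ℤ) = (n : ℤ) * ((n : ℤ) - 1) := by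
    intro n
    have h : n ≤ n * n := by
      rcases n with _ | m
      · simp
      · exact Nat.le_mul_of_pos_left _ (Nat.succ_pos m)
    rw [Nat.cast_sub h]; push_cast; ring
  calc (A.card : ℤ) * ((A.card : ℤ) - 1)
      = ((A.card * A.card - A.card : ℕ) : ℤ) := (hsq A.card).symm
    _ = ((A.offDiag.card : ℕ) : ℤ) := by rw [Finset.offDiag_card]
    _ = ∑ p ∈ P, (((F p).card * (F p).card - (F p).card : ℕ) : ℤ) := by
        rw [hcount]; push_cast [Nat.cast_sum]; rfl
    _ = ∑ p ∈ P, ((F p).card : ℤ) * (((F p).card : ℤ) - 1) :=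
        Finset.sum_congr rfl fun p _ => hsq _
    _ = ∑ m ∈ Finset.Icc 2 A.card, ∑ p ∈ P.filter (fun p => (F p).card = m),
          ((F p).card : ℤ) * (((F p).card : ℤ) - 1) :=
        (Finset.sum_fiberwise_of_maps_to hn_mem _).symm
    _ = ∑ m ∈ Finset.Icc 2 A.card, (m : ℤ) * ((m : ℤ) - 1) * (tm A m : ℤ) := by
        refine Finset.sum_congr rfl fun m hm => ?_
        rw [htm m hm,
          Finset.sum_congr rfl (fun p hp => by rw [(Finset.mem_filter.1 hp).2]),
          Finset.sum_const, nsmul_eq_mul]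
        ring

end Aux

/-- For an arrangement of `d` lines with `t_d = t_{d-1} = 0`,
`(d-2) c̄₁² - (2d-6) c̄₂ ≥ 0`, with equality if and only if `t_2 = d(d-1)/2`
(i.e. the arrangement has only nodes). -/
theorem stmt_9 {k : Type*} [Field k] (A : Finset (ProjPlane k))
    (hd : 2 ≤ A.card) (h1 : tm A A.card = 0) (h2 : tm A (A.card - 1) = 0) :
    0 ≤ ((A.card : ℤ) - 2) * c1sq A - (2 * (A.card : ℤ) - 6) * c2 A ∧
    (((A.card : ℤ) - 2) * c1sq A - (2 * (A.card : ℤ) - 6) * c2 A = 0 ↔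
      tm A 2 = A.card * (A.card - 1) / 2) := by
  have hid := count_identity A
  -- combine the two sums
  have hA : ((A.card : ℤ) - 2) * (∑ m ∈ Finset.Icc 2 A.card, (3 * (m : ℤ) - 4) * (tm A m : ℤ))
      - (2 * (A.card : ℤ) - 6) * (∑ m ∈ Finset.Icc 2 A.card, ((m : ℤ) - 1) * (tm A m : ℤ))
      = ∑ m ∈ Finset.Icc 2 A.card,
          ((m : ℤ) * (A.card : ℤ) - 2 * (A.card : ℤ) + 2) * (tm A m : ℤ) := by
    rw [Finset.mul_sum, Finset.mul_sum, ← Finset.sum_sub_distrib]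
    exact Finset.sum_congr rfl fun m _ => by ring
  have h3 : ∑ m ∈ Finset.Icc 2 A.card,
        ((m : ℤ) * (A.card : ℤ) - 2 * (A.card : ℤ) + 2) * (tm A m : ℤ)
      - ∑ m ∈ Finset.Icc 2 A.card, (m : ℤ) * ((m : ℤ) - 1) * (tm A m : ℤ)
      = ∑ m ∈ Finset.Icc 2 A.card,
          ((m : ℤ) - 2) * ((A.card : ℤ) - 1 - (m : ℤ)) * (tm A m : ℤ) := by
    rw [← Finset.sum_sub_distrib]
    exact Finset.sum_congr rfl fun m _ => by ring
  have hE : ((A.card : ℤ) - 2) * c1sq A - (2 * (A.card : ℤ) - 6) * c2 A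
      = ∑ m ∈ Finset.Icc 2 A.card,
          ((m : ℤ) - 2) * ((A.card : ℤ) - 1 - (m : ℤ)) * (tm A m : ℤ) := by
    rw [c1sq, c2]
    linear_combination hA + h3 - hid
  have hterm : ∀ m ∈ Finset.Icc 2 A.card,
      0 ≤ ((m : ℤ) - 2) * ((A.card : ℤ) - 1 - (m : ℤ)) * (tm A m : ℤ) := by
    intro m hm
    rw [Finset.mem_Icc] at hm
    rcases eq_or_lt_of_le hm.2 with rfl | hlt
    · rw [h1]; simp
    · have hm1 := hm.1
      exact mul_nonneg (mul_nonneg (by omega) (by omega)) (Int.natCast_nonneg _)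
  have hins : Finset.Icc 2 A.card = insert 2 (Finset.Icc 3 A.card) := by
    ext x; simp only [Finset.mem_Icc, Finset.mem_insert]; omega
  have h2notin : (2 : ℕ) ∉ Finset.Icc 3 A.card := by simp
  constructor
  · rw [hE]; exact Finset.sum_nonneg hterm
  constructor
  · intro hE0
    rw [hE] at hE0
    have hzero := (Finset.sum_eq_zero_iff_of_nonneg hterm).1 hE0
    have htm0 : ∀ m ∈ Finset.Icc 3 A.card, tm A m = 0 := by
      intro m hm
      rw [Finset.mem_Icc] at hm
      by_cases hmd : m = A.card
      · rw [hmd]; exact h1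
      by_cases hmd1 : m = A.card - 1
      · rw [hmd1]; exact h2
      have hmem : m ∈ Finset.Icc 2 A.card := Finset.mem_Icc.2 ⟨by omega, hm.2⟩
      have hz := hzero m hmem
      have hc1 : ((m : ℤ) - 2) ≠ 0 := by
        have := hm.1; omega
      have hc2 : ((A.card : ℤ) - 1 - (m : ℤ)) ≠ 0 := by
        have h1' := hm.2; have := hm.1; omega
      have : (tm A m : ℤ) = 0 :=
        (mul_eq_zero.1 hz).resolve_left (mul_ne_zero hc1 hc2)
      exact_mod_cast this
    have hsum : ∑ m ∈ Finset.Icc 2 A.card, (m : ℤ) * ((m : ℤ) - 1) * (tm A m : ℤ)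
        = 2 * (tm A 2 : ℤ) := by
      rw [hins, Finset.sum_insert h2notin,
        Finset.sum_eq_zero (fun m hm => by rw [htm0 m hm]; simp)]
      push_cast; ring
    have hkey : (A.card : ℤ) * ((A.card : ℤ) - 1) = 2 * (tm A 2 : ℤ) := hid.trans hsum
    have hnat : A.card * (A.card - 1) = 2 * tm A 2 := by
      have hcast : ((A.card * (A.card - 1) : ℕ) : ℤ) = 2 * (tm A 2 : ℤ) := by
        rw [Nat.cast_mul, Nat.cast_sub (by omega : 1 ≤ A.card)]
        push_cast
        linarith [hkey]
      exact_mod_cast hcast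
    omega
  · intro ht2
    have heven : 2 ∣ A.card * (A.card - 1) := by
      have hev := Nat.even_mul_succ_self (A.card - 1)
      rw [Nat.sub_add_cancel (by omega : 1 ≤ A.card)] at hev
      rw [mul_comm]
      exact hev.two_dvd
    have h2t : 2 * tm A 2 = A.card * (A.card - 1) := by
      rw [ht2, Nat.mul_div_cancel' heven]
    have hcast : (A.card : ℤ) * ((A.card : ℤ) - 1) = 2 * (tm A 2 : ℤ) := by
      have : ((A.card * (A.card - 1) : ℕ) : ℤ) = ((2 * tm A 2 : ℕ) : ℤ) := by
        rw [h2t]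
      rw [Nat.cast_mul, Nat.cast_sub (by omega : 1 ≤ A.card)] at this
      push_cast at this ⊢
      linarith [this]
    have hsum0 : ∑ m ∈ Finset.Icc 3 A.card, (m : ℤ) * ((m : ℤ) - 1) * (tm A m : ℤ) = 0 := by
      rw [hins, Finset.sum_insert h2notin] at hid
      have h22 : ((2 : ℕ) : ℤ) * (((2 : ℕ) : ℤ) - 1) * (tm A 2 : ℤ) = 2 * (tm A 2 : ℤ) := by
        push_cast; ring
      rw [h22] at hid
      linarith [hid, hcast]
    have htm0 : ∀ m ∈ Finset.Icc 3 A.card, tm A m = 0 := by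
      have hnn : ∀ m ∈ Finset.Icc 3 A.card,
          0 ≤ (m : ℤ) * ((m : ℤ) - 1) * (tm A m : ℤ) := by
        intro m hm
        rw [Finset.mem_Icc] at hm
        have := hm.1
        exact mul_nonneg (mul_nonneg (by omega) (by omega)) (Int.natCast_nonneg _)
      have hz := (Finset.sum_eq_zero_iff_of_nonneg hnn).1 hsum0
      intro m hm
      have h := hz m hm
      rw [Finset.mem_Icc] at hm
      have hc1 : (m : ℤ) ≠ 0 := by have := hm.1; omega
      have hc2 : ((m : ℤ) - 1) ≠ 0 := by have := hm.1; omega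
      have : (tm A m : ℤ) = 0 :=
        (mul_eq_zero.1 h).resolve_left (mul_ne_zero hc1 hc2)
      exact_mod_cast this
    rw [hE]
    apply Finset.sum_eq_zero
    intro m hm
    by_cases hm2 : m = 2
    · subst hm2; norm_num
    · have hmem : m ∈ Finset.Icc 3 A.card := by
        rw [Finset.mem_Icc] at hm ⊢; omega
      rw [htm0 m hmem]; push_cast; ring
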